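/- For every natural number n ≥ 1 and real numbers q ∈ (0,1] and F ∈ (0,1], it holds that (1 - (1 - q*F)^n)/(n*F) > (1 - (1 - q*F)^(n+1))/((n+1)*F), i.e., the function Φ(F,q,n) = (1 - (1-qF)^n)/(nF) is strictly decreasing in n. -/
import Mathlib

lemma key_aux (x : ℝ) (hx0 : 0 ≤ x) (hx1 : x < 1) (n : ℕ) (hn : 1 ≤ n) :
    (n + 1 : ℝ) * x ^ n - n * x ^ (n + 1) < 1 := by
  have hsum : (n : ℝ) * x ^ n < ∑ k ∈ Finset.range n, x ^ k := by
    have h := Finset.sum_lt_sum (s := Finset.range n) (f := fun _ => x ^ n)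
      (g := fun k => x ^ k)
      (fun i hi => pow_le_pow_of_le_one hx0 hx1.le (Finset.mem_range.mp hi).le)
      ⟨0, Finset.mem_range.mpr (by omega), by simpa using pow_lt_one₀ hx0 hx1 (by omega)⟩
    simpa using h
  have hgeom : (1 - x) * ∑ k ∈ Finset.range n, x ^ k = 1 - x ^ n := by
    have h := geom_sum_mul x n
    nlinarith [h]
  have hpos : 0 < (1 - x) * ((∑ k ∈ Finset.range n, x ^ k) - n * x ^ n) :=
    mul_pos (by linarith) (by linarith)
  have hexp : (1 - x) * ((∑ k ∈ Finset.range n, x ^ k) - n * x ^ n)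
      = 1 - (n + 1 : ℝ) * x ^ n + n * x ^ (n + 1) := by
    rw [mul_sub, hgeom]; ring
  linarith [hexp ▸ hpos]

theorem stmt_4 (n : ℕ) (hn : 1 ≤ n) (q F : ℝ) (hq0 : 0 < q) (hq1 : q ≤ 1)
    (hF0 : 0 < F) (hF1 : F ≤ 1) :
    (1 - (1 - q * F) ^ (n + 1)) / ((n + 1) * F) < (1 - (1 - q * F) ^ n) / (n * F) := by
  set x := 1 - q * F with hx
  have hx0 : 0 ≤ x := by
    have : q * F ≤ 1 := by nlinarith
    linarith
  have hx1 : x < 1 := by nlinarith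
  have hn0 : (0 : ℝ) < n := by exact_mod_cast hn
  have key := key_aux x hx0 hx1 n hn
  rw [div_lt_div_iff₀ (by positivity) (by positivity)]
  push_cast
  nlinarith [mul_pos hF0 (by linarith : (0:ℝ) < 1 - ((n + 1 : ℝ) * x ^ n - n * x ^ (n + 1)))]
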